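/- Let N ≥ 1, let u : ℝ^N → ℂ be continuously differentiable, let t ≥ 0, set s = t/(1+t), and define v : ℝ^N → ℂ by v(y) = (1+t)^{N/2} u((1+t)y) e^{-i(1+t)|y|²/4}. Then ∫_{ℝ^N} |∇u(x)|² dx = (1/4) ∫_{ℝ^N} |y v(y) − 2i(1−s) ∇v(y)|² dy, where both sides are Lebesgue integrals of nonnegative functions (possibly +∞); here y v(y) − 2i(1−s)∇v(y) denotes the ℂ^N-valued function whose k-th component is y_k v(y) − 2i(1−s) ∂_k v(y). -/

import Mathlib

open MeasureTheory Complex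


lemma keyderiv {N : ℕ} (u : EuclideanSpace ℝ (Fin N) → ℂ) (hu : ContDiff ℝ 1 u)
    (a : ℝ) (c : ℝ) (v : EuclideanSpace ℝ (Fin N) → ℂ)
    (hv : ∀ y, v y = ((c:ℝ):ℂ) * u (a • y) *
      Complex.exp (-(Complex.I * ((a:ℝ):ℂ) * (‖y‖:ℂ)^2 / 4)))
    (y : EuclideanSpace ℝ (Fin N)) (k : Fin N) :
    fderiv ℝ v y (EuclideanSpace.single k 1) =
      ((c:ℝ):ℂ) * Complex.exp (-(Complex.I * ((a:ℝ):ℂ) * (‖y‖:ℂ)^2 / 4)) *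
        (((a:ℝ):ℂ) * fderiv ℝ u (a • y) (EuclideanSpace.single k 1)
          - Complex.I * ((a:ℝ):ℂ) * ((y k : ℝ):ℂ) / 2 * u (a • y)) := by
  have hveq : v = fun y => (((c:ℝ):ℂ) * u (a • y)) *
      Complex.exp ((-(Complex.I * ((a:ℝ):ℂ) / 4)) * (((‖y‖^2 : ℝ):ℝ):ℂ)) := by
    funext z
    rw [hv z]
    push_cast
    ring_nf
  have hq : HasFDerivAt (fun x : EuclideanSpace ℝ (Fin N) => ‖x‖^2)
      (2 • (innerSL ℝ y)) y := (hasStrictFDerivAt_norm_sq y).hasFDerivAt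
  have h1 : HasFDerivAt (fun x : EuclideanSpace ℝ (Fin N) => ((‖x‖^2 : ℝ):ℂ))
      (Complex.ofRealCLM.comp (2 • (innerSL ℝ y))) y :=
    Complex.ofRealCLM.hasFDerivAt.comp y hq
  have h2 := h1.const_mul (-(Complex.I * ((a:ℝ):ℂ) / 4))
  have hE := h2.cexp
  have hsm : HasFDerivAt (fun x : EuclideanSpace ℝ (Fin N) => a • x)
      (a • (ContinuousLinearMap.id ℝ (EuclideanSpace ℝ (Fin N)))) y :=
    (hasFDerivAt_id y).const_smul a
  have hu' : HasFDerivAt u (fderiv ℝ u (a • y)) (a • y) :=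
    (hu.differentiable one_ne_zero (a • y)).hasFDerivAt
  have hP : HasFDerivAt (fun x : EuclideanSpace ℝ (Fin N) => ((c:ℝ):ℂ) * u (a • x))
      (((c:ℝ):ℂ) • (fderiv ℝ u (a • y)).comp
        (a • (ContinuousLinearMap.id ℝ (EuclideanSpace ℝ (Fin N))))) y :=
    (hu'.comp y hsm).const_mul ((c:ℝ):ℂ)
  have hVD := hP.mul hE
  rw [hveq, HasFDerivAt.fderiv (f := fun x : EuclideanSpace ℝ (Fin N) => (((c:ℝ):ℂ) * u (a • x)) *
      Complex.exp ((-(Complex.I * ((a:ℝ):ℂ) / 4)) * (((‖x‖^2 : ℝ):ℝ):ℂ))) hVD]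
  simp only [ContinuousLinearMap.add_apply, ContinuousLinearMap.smul_apply,
    ContinuousLinearMap.comp_apply, ContinuousLinearMap.coe_smul',
    Pi.smul_apply, ContinuousLinearMap.id_apply, innerSL_apply_apply,
    Complex.ofRealCLM_apply]
  rw [EuclideanSpace.inner_single_right]
  simp only [smul_eq_mul, Complex.real_smul, _root_.map_smul]
  push_cast
  ring_nf
  simp

/-- `∫ |∇u|² = (1/4) ∫ |y v − 2i(1−s)∇v|²` for the spatial
pseudoconformal transform `v` of `u` at time `t`, with `s = t/(1+t)`. -/
theorem stmt4 {N : ℕ} (hN : 1 ≤ N) (u : EuclideanSpace ℝ (Fin N) → ℂ)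
    (hu : ContDiff ℝ 1 u) (t : ℝ) (ht : 0 ≤ t)
    (s : ℝ) (hs : s = t / (1 + t))
    (v : EuclideanSpace ℝ (Fin N) → ℂ)
    (hv : ∀ y, v y = (((1 + t) ^ ((N:ℝ)/2) : ℝ) : ℂ) * u ((1 + t) • y) *
      Complex.exp (-(Complex.I * ((1 + t : ℝ) : ℂ) * (‖y‖:ℂ)^2 / 4))) :
    ∫⁻ x, ENNReal.ofReal (∑ k : Fin N,
        ‖fderiv ℝ u x (EuclideanSpace.single k 1)‖ ^ 2) =
    ENNReal.ofReal (1/4) * ∫⁻ y, ENNReal.ofReal (∑ k : Fin N,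
        ‖((y k : ℝ) : ℂ) * v y -
          2 * Complex.I * ((1 - s : ℝ) : ℂ) *
            fderiv ℝ v y (EuclideanSpace.single k 1)‖ ^ 2) := by
  set a : ℝ := 1 + t with ha_def
  have ha : (0:ℝ) < a := by positivity
  set c : ℝ := a ^ ((N:ℝ)/2) with hc_def
  have hc : (0:ℝ) < c := Real.rpow_pos_of_pos ha _
  have hkd := keyderiv u hu a c v hv
  -- the cancellation (1-s)(1+t) = 1
  have h1s : (1 - s) * a = 1 := by
    rw [hs, ha_def]; field_simp; ring
  -- pointwise identity for the combination
  have hpt : ∀ y k, ((y k : ℝ):ℂ) * v y -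
      2 * Complex.I * ((1 - s : ℝ):ℂ) * fderiv ℝ v y (EuclideanSpace.single k 1)
      = (-2) * Complex.I * ((c:ℝ):ℂ) *
          Complex.exp (-(Complex.I * ((a:ℝ):ℂ) * (‖y‖:ℂ)^2 / 4)) *
          ((1 - s : ℝ):ℂ) * ((a:ℝ):ℂ) *
          fderiv ℝ u (a • y) (EuclideanSpace.single k 1) := by
    intro y k
    rw [hkd y k, hv y]
    have h1s' : ((1 - s : ℝ):ℂ) * ((a:ℝ):ℂ) = 1 := by
      rw [← Complex.ofReal_mul, h1s, Complex.ofReal_one]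
    linear_combination (-(((y k : ℝ):ℂ) * ((c:ℝ):ℂ) *
        Complex.exp (-(Complex.I * ((a:ℝ):ℂ) * (‖y‖:ℂ)^2 / 4)) * u (a • y))) * h1s' +
      (((y k : ℝ):ℂ) * ((c:ℝ):ℂ) *
        Complex.exp (-(Complex.I * ((a:ℝ):ℂ) * (‖y‖:ℂ)^2 / 4)) * u (a • y) *
        (((1 - s : ℝ):ℂ) * ((a:ℝ):ℂ))) * Complex.I_sq
  -- absolute value of the exponential factor is 1
  have hexp : ∀ y : EuclideanSpace ℝ (Fin N),
      ‖Complex.exp (-(Complex.I * ((a:ℝ):ℂ) * (‖y‖:ℂ)^2 / 4))‖ = 1 := by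
    intro y
    have : -(Complex.I * ((a:ℝ):ℂ) * (‖y‖:ℂ)^2 / 4)
        = ((-(a * ‖y‖^2 / 4) : ℝ):ℂ) * Complex.I := by push_cast; ring
    rw [this, Complex.norm_exp_ofReal_mul_I]
  -- pointwise identity for the sum
  have hsum : ∀ y : EuclideanSpace ℝ (Fin N),
      (∑ k : Fin N, ‖((y k : ℝ):ℂ) * v y -
          2 * Complex.I * ((1 - s : ℝ):ℂ) *
            fderiv ℝ v y (EuclideanSpace.single k 1)‖ ^ 2)
      = 4 * c^2 * ∑ k : Fin N,
          ‖fderiv ℝ u (a • y) (EuclideanSpace.single k 1)‖ ^ 2 := by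
    intro y
    rw [Finset.mul_sum]
    refine Finset.sum_congr rfl fun k _ => ?_
    rw [hpt y k]
    have h1spos : (0:ℝ) < 1 - s := by nlinarith [h1s]
    have habs : ‖(-2) * Complex.I * ((c:ℝ):ℂ) *
        Complex.exp (-(Complex.I * ((a:ℝ):ℂ) * (‖y‖:ℂ)^2 / 4)) *
        ((1 - s : ℝ):ℂ) * ((a:ℝ):ℂ) *
        fderiv ℝ u (a • y) (EuclideanSpace.single k 1)‖
        = 2 * c * ‖fderiv ℝ u (a • y) (EuclideanSpace.single k 1)‖ := by
      simp only [norm_mul, norm_neg, Complex.norm_I, Complex.norm_real, Real.norm_eq_abs, hexp y,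
        Complex.norm_two, abs_of_pos hc, abs_of_pos ha, abs_of_pos h1spos]
      linear_combination (2 * c * ‖
        fderiv ℝ u (a • y) (EuclideanSpace.single k 1)‖) * h1s
    rw [habs]
    ring
  -- measurability of the integrand
  have hFc : Continuous (fun x => ∑ k : Fin N,
      ‖fderiv ℝ u x (EuclideanSpace.single k 1)‖ ^ 2) := by
    apply continuous_finset_sum
    intro k _
    have h1 : Continuous (fderiv ℝ u) := hu.continuous_fderiv one_ne_zero
    have h2 : Continuous (fun x => fderiv ℝ u x (EuclideanSpace.single k 1)) :=
      h1.clm_apply continuous_const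
    exact (continuous_norm.comp h2).pow 2
  -- change of variables
  have hN' : Module.finrank ℝ (EuclideanSpace ℝ (Fin N)) = N := by
    simp [finrank_euclideanSpace]
  have hmap : Measure.map (fun y : EuclideanSpace ℝ (Fin N) => a • y) volume
      = ENNReal.ofReal (|(a ^ N : ℝ)|⁻¹) • volume := by
    rw [Measure.map_addHaar_smul volume ha.ne', hN', abs_inv]
  have hmeas_smul : Measurable (fun y : EuclideanSpace ℝ (Fin N) => a • y) :=
    (continuous_const_smul a).measurable
  have hg : Measurable (fun x => ENNReal.ofReal (∑ k : Fin N,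
      ‖fderiv ℝ u x (EuclideanSpace.single k 1)‖ ^ 2)) :=
    (ENNReal.measurable_ofReal.comp hFc.measurable)
  have hchange : ∫⁻ y, ENNReal.ofReal (∑ k : Fin N,
        ‖fderiv ℝ u (a • y) (EuclideanSpace.single k 1)‖ ^ 2)
      = ENNReal.ofReal ((a ^ N : ℝ)⁻¹) * ∫⁻ x, ENNReal.ofReal (∑ k : Fin N,
        ‖fderiv ℝ u x (EuclideanSpace.single k 1)‖ ^ 2) := by
    rw [← lintegral_map hg hmeas_smul, hmap, lintegral_smul_measure,
      abs_of_pos (by positivity : (0:ℝ) < a ^ N), smul_eq_mul]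
  -- put it together
  calc ∫⁻ x, ENNReal.ofReal (∑ k : Fin N,
        ‖fderiv ℝ u x (EuclideanSpace.single k 1)‖ ^ 2)
      = (ENNReal.ofReal (1/4) * ENNReal.ofReal (4 * c^2) *
          ENNReal.ofReal ((a ^ N : ℝ)⁻¹)) *
        ∫⁻ x, ENNReal.ofReal (∑ k : Fin N,
          ‖fderiv ℝ u x (EuclideanSpace.single k 1)‖ ^ 2) := by
        have hc2 : c ^ 2 = a ^ N := by
          rw [hc_def, ← Real.rpow_natCast (a ^ ((N:ℝ)/2)) 2, ← Real.rpow_mul ha.le]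
          rw [show ((N:ℝ)/2 * ((2:ℕ):ℝ)) = (N:ℝ) by push_cast; ring, Real.rpow_natCast]
        rw [← ENNReal.ofReal_mul (by norm_num), ← ENNReal.ofReal_mul (by positivity)]
        rw [hc2]
        rw [show (1/4 * (4 * a ^ N) * (a ^ N)⁻¹ : ℝ) = 1 by
          have hne : (a:ℝ) ^ N ≠ 0 := by positivity
          field_simp]
        simp
    _ = ENNReal.ofReal (1/4) * ∫⁻ y, ENNReal.ofReal (∑ k : Fin N,
          ‖((y k : ℝ):ℂ) * v y -
            2 * Complex.I * ((1 - s : ℝ):ℂ) *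
              fderiv ℝ v y (EuclideanSpace.single k 1)‖ ^ 2) := by
        have : ∫⁻ y, ENNReal.ofReal (∑ k : Fin N,
            ‖((y k : ℝ):ℂ) * v y -
              2 * Complex.I * ((1 - s : ℝ):ℂ) *
                fderiv ℝ v y (EuclideanSpace.single k 1)‖ ^ 2)
            = ∫⁻ y, ENNReal.ofReal (4 * c^2) * ENNReal.ofReal (∑ k : Fin N,
              ‖fderiv ℝ u (a • y) (EuclideanSpace.single k 1)‖ ^ 2) := by
          refine lintegral_congr fun y => ?_
          rw [hsum y, ENNReal.ofReal_mul (by positivity)]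
        rw [this, lintegral_const_mul' _ _ ENNReal.ofReal_ne_top, hchange]
        ring
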